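/- If a graph G is factorizable (A = BC for adjacency matrices of G and two graphs H, K), then G has an even number of edges. -/
import Mathlib

open SimpleGraph Matrix

lemma even_card_of_invol {α : Type*} [DecidableEq α] (s : Finset α) (f : α → α)
    (h1 : ∀ a ∈ s, f a ∈ s) (h2 : ∀ a ∈ s, f (f a) = a) (h3 : ∀ a ∈ s, f a ≠ a) :
    Even s.card := by
  induction s using Finset.strongInduction with
  | _ s ih =>
    rcases s.eq_empty_or_nonempty with rfl | ⟨a, ha⟩
    · simp
    · have hfa := h1 a ha
      have hne := h3 a ha
      set t := s \ {a, f a} with ht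
      have hsub : t ⊂ s := by
        refine (Finset.ssubset_iff_of_subset Finset.sdiff_subset).2 ⟨a, ha, ?_⟩
        simp [ht]
      have hpair : ({a, f a} : Finset α) ⊆ s := by
        intro x hx
        rcases Finset.mem_insert.1 hx with rfl | hx
        · exact ha
        · rw [Finset.mem_singleton] at hx; exact hx ▸ hfa
      have hcard : s.card = t.card + 2 := by
        rw [ht, Finset.card_sdiff_of_subset hpair, Finset.card_pair (Ne.symm hne)]
        have : ({a, f a} : Finset α).card ≤ s.card := Finset.card_le_card hpair
        rw [Finset.card_pair (Ne.symm hne)] at this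
        omega
      have hmem : ∀ b ∈ t, f b ∈ t := by
        intro b hb
        rw [ht, Finset.mem_sdiff] at hb ⊢
        obtain ⟨hbs, hbn⟩ := hb
        simp only [Finset.mem_insert, Finset.mem_singleton] at hbn ⊢
        push_neg at hbn ⊢
        refine ⟨h1 b hbs, ?_, ?_⟩
        · intro h; exact hbn.2 (by rw [← h2 b hbs, h])
        · intro h
          exact hbn.1 (by rw [← h2 b hbs, h, h2 a ha])
      have := ih t hsub
        (fun b hb => hmem b hb)
        (fun b hb => h2 b (Finset.mem_sdiff.1 hb).1)
        (fun b hb => h3 b (Finset.mem_sdiff.1 hb).1)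
      rw [hcard]
      exact this.add (by norm_num)

theorem stmt18 {n : ℕ} (G H K : SimpleGraph (Fin n))
    [DecidableRel G.Adj] [DecidableRel H.Adj] [DecidableRel K.Adj]
    (hfac : G.adjMatrix ℝ = H.adjMatrix ℝ * K.adjMatrix ℝ) :
    Even G.edgeFinset.card := by
  classical
  -- the witness-counting set
  set S : Fin n → Fin n → Finset (Fin n) :=
    fun i j => Finset.univ.filter (fun k => H.Adj i k ∧ K.Adj k j) with hS
  have key : ∀ i j, ((S i j).card : ℕ) = if G.Adj i j then 1 else 0 := by
    intro i j
    have h := congrFun (congrFun hfac i) j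
    rw [Matrix.mul_apply] at h
    have hsum : (∑ k, H.adjMatrix ℝ i k * K.adjMatrix ℝ k j)
        = ((S i j).card : ℝ) := by
      rw [hS]
      rw [Finset.card_filter]
      push_cast
      refine Finset.sum_congr rfl fun k _ => ?_
      by_cases h1 : H.Adj i k <;> by_cases h2 : K.Adj k j <;>
        simp [h1, h2]
    rw [hsum] at h
    by_cases hadj : G.Adj i j
    · simp only [hadj, if_true]
      have : ((S i j).card : ℝ) = 1 := by rw [← h]; simp [hadj]
      exact_mod_cast this
    · simp only [hadj, if_false]
      have : ((S i j).card : ℝ) = 0 := by rw [← h]; simp [hadj]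
      exact_mod_cast this
  -- existence and uniqueness of witnesses
  set w : Fin n → Fin n → Fin n :=
    fun i j => if h : ∃ k, H.Adj i k ∧ K.Adj k j then h.choose else i with hw
  have hwit : ∀ i j, G.Adj i j → H.Adj i (w i j) ∧ K.Adj (w i j) j := by
    intro i j hadj
    have hc := key i j
    rw [if_pos hadj] at hc
    obtain ⟨k, hk⟩ := Finset.card_eq_one.1 hc
    have hkmem : k ∈ S i j := hk ▸ Finset.mem_singleton_self k
    rw [hS, Finset.mem_filter] at hkmem
    have hex : ∃ k, H.Adj i k ∧ K.Adj k j := ⟨k, hkmem.2⟩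
    rw [hw]; simp only [dif_pos hex]
    exact hex.choose_spec
  have huniq : ∀ i j k, G.Adj i j → H.Adj i k → K.Adj k j → k = w i j := by
    intro i j k hadj h1 h2
    have hc := key i j
    rw [if_pos hadj] at hc
    have hkmem : k ∈ S i j := by rw [hS, Finset.mem_filter]; exact ⟨Finset.mem_univ _, h1, h2⟩
    have hwmem : w i j ∈ S i j := by
      rw [hS, Finset.mem_filter]
      exact ⟨Finset.mem_univ _, hwit i j hadj⟩
    obtain ⟨a, ha⟩ := Finset.card_eq_one.1 hc
    rw [ha, Finset.mem_singleton] at hkmem hwmem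
    rw [hkmem, hwmem]
  -- the involution on edges
  set f : Sym2 (Fin n) → Sym2 (Fin n) :=
    Sym2.lift ⟨fun i j => s(w i j, w j i), fun i j => Sym2.eq_swap⟩ with hf
  have hflift : ∀ i j, f s(i, j) = s(w i j, w j i) := fun i j => rfl
  have hadjkl : ∀ i j, G.Adj i j → G.Adj (w i j) (w j i) := by
    intro i j hadj
    obtain ⟨Hik, Kkj⟩ := hwit i j hadj
    obtain ⟨Hjl, Kli⟩ := hwit j i hadj.symm
    by_contra hno
    have hc := key (w i j) (w j i)
    rw [if_neg hno] at hc
    have : i ∈ S (w i j) (w j i) := by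
      rw [hS, Finset.mem_filter]
      exact ⟨Finset.mem_univ _, Hik.symm, Kli.symm⟩
    have := Finset.card_pos.2 ⟨i, this⟩
    omega
  refine even_card_of_invol G.edgeFinset f ?_ ?_ ?_
  · intro e he
    induction e using Sym2.ind with
    | _ i j =>
      rw [SimpleGraph.mem_edgeFinset, SimpleGraph.mem_edgeSet] at he
      rw [hflift, SimpleGraph.mem_edgeFinset, SimpleGraph.mem_edgeSet]
      exact hadjkl i j he
  · intro e he
    induction e using Sym2.ind with
    | _ i j =>
      rw [SimpleGraph.mem_edgeFinset, SimpleGraph.mem_edgeSet] at he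
      obtain ⟨Hik, Kkj⟩ := hwit i j he
      obtain ⟨Hjl, Kli⟩ := hwit j i he.symm
      have hkl := hadjkl i j he
      rw [hflift, hflift]
      have e1 : w (w i j) (w j i) = i := (huniq _ _ _ hkl Hik.symm Kli.symm).symm
      have e2 : w (w j i) (w i j) = j := (huniq _ _ _ hkl.symm Hjl.symm Kkj.symm).symm
      rw [e1, e2]
  · intro e he
    induction e using Sym2.ind with
    | _ i j =>
      rw [SimpleGraph.mem_edgeFinset, SimpleGraph.mem_edgeSet] at he
      obtain ⟨Hik, Kkj⟩ := hwit i j he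
      obtain ⟨Hjl, Kli⟩ := hwit j i he.symm
      rw [hflift]
      intro hcon
      rw [Sym2.eq_iff] at hcon
      rcases hcon with ⟨h1, h2⟩ | ⟨h1, h2⟩
      · rw [h1] at Hik; exact H.irrefl Hik
      · rw [h2] at Kli; exact K.irrefl Kli
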